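/- Let L₀ > 8r₀. If n-particle cubes Λ_{L_k}^{(n)}(u), Λ_{L_k}^{(n)}(v) (k ≥ 0) are both fully interactive and ‖u−v‖ ≥ 11nL_k, then these cubes are completely separable, and the random operators H^{(n)}_{Λ_{L_k}^{(n)}(u)} and H^{(n)}_{Λ_{L_k}^{(n)}(v)} are independent. -/

import Mathlib

open MeasureTheory ProbabilityTheory

namespace MP

/-- A point of the single-particle lattice `ℤ^d`. -/
abbrev Pt (d : ℕ) := Fin d → ℤ

/-- A configuration of `n` particles in `ℤ^d`, i.e. a point of `ℤ^{nd}`. -/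
abbrev Cfg (n d : ℕ) := Fin n → Pt d

/-- The max-norm `‖x‖ = max_i |x_i|` on `ℤ^d`. -/
def ptNorm {d : ℕ} (x : Pt d) : ℕ := Finset.univ.sup fun i => (x i).natAbs

/-- The max-norm `‖x‖ = max_j ‖x_j‖` on `ℤ^{nd}`. -/
def cfgNorm {n d : ℕ} (x : Cfg n d) : ℕ := Finset.univ.sup fun j => ptNorm (x j)

/-- `⟨x⟩ = max {1, ‖x‖}`. -/
def jap {n d : ℕ} (x : Cfg n d) : ℕ := max 1 (cfgNorm x)

/-- The `n`-particle cube of radius `L` centered at `u`. -/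
noncomputable def cube {n d : ℕ} (L : ℕ) (u : Cfg n d) : Finset (Cfg n d) :=
  Finset.Icc (fun j i => u j i - (L : ℤ)) (fun j i => u j i + (L : ℤ))

/-- Partial projection `Π_J Λ = ∪_{j∈J} Π_j Λ ⊆ ℤ^d`. -/
def projJ {n d : ℕ} (J : Finset (Fin n)) (Λ : Finset (Cfg n d)) : Finset (Pt d) :=
  J.biUnion fun j => Λ.image fun x => x j

/-- Full projection `ΠΛ = ∪_{j=1}^n Π_j Λ ⊆ ℤ^d`. -/
def projFull {n d : ℕ} (Λ : Finset (Cfg n d)) : Finset (Pt d) := projJ Finset.univ Λ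

/-- Weak separability of the pair of `n`-particle cubes `Λ_L(u)`, `Λ_L(v)`. -/
def WeaklySeparable {n d : ℕ} (r0 L : ℕ) (u v : Cfg n d) : Prop :=
  ∃ J : Finset (Fin n), J.Nonempty ∧
    (projJ J (cube (L + r0) u) ∩
        (projJ Jᶜ (cube (L + r0) u) ∪ projFull (cube (L + r0) v)) = ∅ ∨
      projJ J (cube (L + r0) v) ∩
        (projJ Jᶜ (cube (L + r0) v) ∪ projFull (cube (L + r0) u)) = ∅)

/-- Separability: weak separability together with `‖u - v‖ > 11 n L`. -/
def Separable {n d : ℕ} (r0 L : ℕ) (u v : Cfg n d) : Prop :=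
  WeaklySeparable r0 L u v ∧ 11 * n * L < cfgNorm (u - v)

/-- Complete separability: disjoint full projections of the `(L+r₀)`-cubes. -/
def CompletelySeparable {n d : ℕ} (r0 L : ℕ) (u v : Cfg n d) : Prop :=
  projFull (cube (L + r0) u) ∩ projFull (cube (L + r0) v) = ∅

/-- Distance `dist(u, 𝔻₀) = min_{x ∈ ℤ^d} max_j ‖u_j - x‖` to the diagonal. -/
noncomputable def diagDist {n d : ℕ} (u : Cfg n d) : ℕ :=
  sInf {m : ℕ | ∃ x : Pt d, ∀ j, ptNorm (u j - x) ≤ m}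

/-- Fully interactive cube. -/
def IsFI {n d : ℕ} (r0 L : ℕ) (u : Cfg n d) : Prop := diagDist u ≤ 2 * n * (L + r0)

/-- Partially interactive cube. -/
def IsPI {n d : ℕ} (r0 L : ℕ) (u : Cfg n d) : Prop := ¬ IsFI r0 L u

/-- The power-law long-range hopping kernel (Assumption A):
`T(x,y) = ⟨y_j - x_j⟩^{-r}` if `x_i = y_i` for all `i ≠ j`, and `0` otherwise. -/
noncomputable def hopT {n d : ℕ} (r : ℝ) (x y : Cfg n d) : ℝ :=
  if h : ∃ j, ∀ i, i ≠ j → x i = y i then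
    ((max 1 (ptNorm (y h.choose - x h.choose)) : ℕ) : ℝ) ^ (-r)
  else 0

/-- The total interaction `U(x) = ∑_{j₁ < j₂} U(x_{j₁}, x_{j₂})` (Assumption B). -/
def pairU {n d : ℕ} (U : Pt d → Pt d → ℝ) (x : Cfg n d) : ℝ :=
  ∑ p ∈ Finset.univ.filter (fun p : Fin n × Fin n => p.1 < p.2), U (x p.1) (x p.2)

/-- The `n`-particle Hamiltonian kernel
`H(x,y) = g⁻¹ (T(x,y) + δ_{xy} U(x)) + δ_{xy} ∑_j v(x_j)`
for a fixed realization `v : ℤ^d → ℝ` of the potential. -/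
noncomputable def ham {n d : ℕ} (g r : ℝ) (U : Pt d → Pt d → ℝ) (v : Pt d → ℝ)
    (x y : Cfg n d) : ℝ :=
  (1 / g) * (hopT r x y + if x = y then pairU U x else 0) +
    (if x = y then ∑ j, v (x j) else 0)

/-- `G` is the Green's function `(H_Λ - E)⁻¹` of the restriction of `H` to `Λ`
with Dirichlet boundary conditions. -/
def IsGreen {n d : ℕ} (Λ : Finset (Cfg n d)) (H : Cfg n d → Cfg n d → ℝ) (E : ℝ)
    (G : Cfg n d → Cfg n d → ℝ) : Prop :=
  (∀ x y, (x ∉ Λ ∨ y ∉ Λ) → G x y = 0) ∧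
  (∀ x ∈ Λ, ∀ y ∈ Λ,
    ∑ z ∈ Λ, (H x z - if x = z then E else 0) * G z y = if x = y then 1 else 0) ∧
  (∀ x ∈ Λ, ∀ y ∈ Λ,
    ∑ z ∈ Λ, G x z * (H z y - if z = y then E else 0) = if x = y then 1 else 0)

/-- `E` belongs to the spectrum of `H_Λ`, i.e. `H_Λ - E` is not invertible. -/
def SingE {n d : ℕ} (Λ : Finset (Cfg n d)) (H : Cfg n d → Cfg n d → ℝ) (E : ℝ) : Prop :=
  ¬ ∃ G, IsGreen Λ H E G

/-- Sobolev norm of a kernel supported on `Λ × Λ`: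
`‖K‖_s² = C₀ ∑_{v} (sup_{x-y=v} |K(x,y)|)² ⟨v⟩^{2s}`. -/
noncomputable def sobNorm {n d : ℕ} (C0 : ℝ) (Λ : Finset (Cfg n d))
    (K : Cfg n d → Cfg n d → ℝ) (s : ℝ) : ℝ :=
  Real.sqrt (C0 * ∑ v ∈ (Λ ×ˢ Λ).image (fun p => p.1 - p.2),
    ((((Λ ×ˢ Λ).filter (fun p => p.1 - p.2 = v)).sup
        (fun p => ‖K p.1 p.2‖₊) : NNReal) : ℝ) ^ 2 * ((jap v : ℕ) : ℝ) ^ (2 * s))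

/-- `Λ` (a cube of radius `L`) is `(E,δ)`-nonsingular: the Green's function exists and
`‖G_Λ(E)‖_s ≤ L^{τ + δ s}` for all `s ∈ [s₀, r_n]`. -/
def IsNS {n d : ℕ} (C0 τ δ s0 rn : ℝ) (L : ℕ) (Λ : Finset (Cfg n d))
    (H : Cfg n d → Cfg n d → ℝ) (E : ℝ) : Prop :=
  ∃ G, IsGreen Λ H E G ∧
    ∀ s : ℝ, s0 ≤ s → s ≤ rn → sobNorm C0 Λ G s ≤ (L : ℝ) ^ (τ + δ * s)

/-- `Λ` (a cube of radius `L`) is `E`-resonant: `dist(E, σ(H_Λ)) < L^{-β}`. -/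
def IsER {n d : ℕ} (β : ℝ) (L : ℕ) (Λ : Finset (Cfg n d))
    (H : Cfg n d → Cfg n d → ℝ) (E : ℝ) : Prop :=
  ∃ E' : ℝ, SingE Λ H E' ∧ |E - E'| < (L : ℝ) ^ (-β)

/-- The scales `L_k = L₀^{4^k}`. -/
def Lscale (L0 k : ℕ) : ℕ := L0 ^ (4 ^ k)

/-- `p^{(m)} = 18^{N-m} p₀`. -/
def pexp (N : ℕ) (p0 : ℝ) (m : ℕ) : ℝ := 18 ^ (N - m) * p0

/-- The energy interval `I = [-MN-1, MN+1]`. -/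
def Ibox (M : ℝ) (N : ℕ) : Set ℝ := Set.Icc (-(M * N) - 1) (M * N + 1)

/-- Property `(SS.N.I.k.n)` at scale `Lk`: for every pair of separable `n`-particle
cubes of radius `Lk`, the probability that for some `E ∈ I` both cubes are
`(E,1/2)`-singular is `< Lk^{-2 p^{(n)}}`. -/
def SSprop {d : ℕ} (n : ℕ) {Ω : Type} [MeasurableSpace Ω] (P : Measure Ω)
    (V : Pt d → Ω → ℝ) (g r : ℝ) (U : Pt d → Pt d → ℝ) (C0 : ℝ)
    (τ s0 rn : ℝ) (I : Set ℝ) (r0 Lk : ℕ) (pn : ℝ) : Prop :=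
  ∀ u v : Cfg n d, Separable r0 Lk u v →
    P {ω | ∃ E ∈ I,
        ¬ IsNS C0 τ (1/2) s0 rn Lk (cube Lk u) (ham g r U fun a => V a ω) E ∧
        ¬ IsNS C0 τ (1/2) s0 rn Lk (cube Lk v) (ham g r U fun a => V a ω) E} <
      ENNReal.ofReal ((Lk : ℝ) ^ (-(2 * pn)))

/-- The cube `Λ_{Lk1}(u)` is `(1/2, I)`-tunneling: it contains two separable
`(E,1/2)`-singular cubes of radius `Lk` for some `E ∈ I`. -/
def IsT {n d : ℕ} (C0 τ s0 rn : ℝ) (I : Set ℝ) (g r : ℝ) (U : Pt d → Pt d → ℝ)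
    (v : Pt d → ℝ) (r0 Lk Lk1 : ℕ) (u : Cfg n d) : Prop :=
  ∃ E ∈ I, ∃ x y : Cfg n d,
    cube Lk x ⊆ cube Lk1 u ∧ cube Lk y ⊆ cube Lk1 u ∧ Separable r0 Lk x y ∧
    ¬ IsNS C0 τ (1/2) s0 rn Lk (cube Lk x) (ham g r U v) E ∧
    ¬ IsNS C0 τ (1/2) s0 rn Lk (cube Lk y) (ham g r U v) E

/-- Restriction of a kernel to `Λ × Λ`. -/
def restrictKer {n d : ℕ} (Λ : Finset (Cfg n d)) (K : Cfg n d → Cfg n d → ℝ) :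
    Cfg n d → Cfg n d → ℝ :=
  fun x y => if x ∈ Λ ∧ y ∈ Λ then K x y else 0

/-- Continuity modulus `ς(ε) = sup_t (μ(t+ε] - μ(t])` of the distribution function of `μ`. -/
noncomputable def contMod (μ : Measure ℝ) (ε : ℝ) : ℝ :=
  ⨆ t : ℝ, (μ (Set.Ioc t (t + ε))).toReal

/-! ### Auxiliary lemmas for Statement 11 -/

lemma ptNorm_le_iff {d : ℕ} {x : Pt d} {M : ℕ} :
    ptNorm x ≤ M ↔ ∀ i, (x i).natAbs ≤ M := by
  simp [ptNorm, Finset.sup_le_iff]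

lemma ptNorm_triangle {d : ℕ} (a b c : Pt d) :
    ptNorm (a - c) ≤ ptNorm (a - b) + ptNorm (b - c) := by
  rw [ptNorm_le_iff]
  intro i
  have h1 : ((a - b) i).natAbs ≤ ptNorm (a - b) :=
    Finset.le_sup (f := fun i => ((a - b) i).natAbs) (Finset.mem_univ i)
  have h2 : ((b - c) i).natAbs ≤ ptNorm (b - c) :=
    Finset.le_sup (f := fun i => ((b - c) i).natAbs) (Finset.mem_univ i)
  have : (a - c) i = (a - b) i + (b - c) i := by
    simp only [Pi.sub_apply]; ring
  rw [this]
  exact le_trans (Int.natAbs_add_le _ _) (Nat.add_le_add h1 h2)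

lemma mem_projFull_cube {n d : ℕ} {Ml : ℕ} {w : Cfg n d} {p : Pt d}
    (hp : p ∈ projFull (cube Ml w)) : ∃ j, ptNorm (p - w j) ≤ Ml := by
  simp only [projFull, projJ, Finset.mem_biUnion, Finset.mem_image, Finset.mem_univ,
    true_and] at hp
  obtain ⟨j, x, hx, hxp⟩ := hp
  rw [cube, Finset.mem_Icc] at hx
  refine ⟨j, ptNorm_le_iff.mpr fun i => ?_⟩
  have h1 := (Pi.le_def.mp (Pi.le_def.mp hx.1 j)) i
  have h2 := (Pi.le_def.mp (Pi.le_def.mp hx.2 j)) i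
  have : p i = x j i := by rw [← hxp]
  simp only [Pi.sub_apply, this]
  omega

lemma mem_projFull_of_mem {n d : ℕ} {Λ : Finset (Cfg n d)} {x : Cfg n d}
    (hx : x ∈ Λ) (j : Fin n) : x j ∈ projFull Λ := by
  simp only [projFull, projJ, Finset.mem_biUnion, Finset.mem_image, Finset.mem_univ,
    true_and]
  exact ⟨j, x, hx, rfl⟩

lemma cube_mono {n d : ℕ} {L M : ℕ} (h : L ≤ M) (w : Cfg n d) :
    cube L w ⊆ cube M w := by
  intro x hx
  rw [cube, Finset.mem_Icc] at hx ⊢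
  have hLM : (L : ℤ) ≤ M := by exact_mod_cast h
  constructor <;> rw [Pi.le_def] <;> intro j <;> rw [Pi.le_def] <;> intro i
  · have := (Pi.le_def.mp (Pi.le_def.mp hx.1 j)) i
    omega
  · have := (Pi.le_def.mp (Pi.le_def.mp hx.2 j)) i
    omega

lemma projFull_mono {n d : ℕ} {Λ Λ' : Finset (Cfg n d)} (h : Λ ⊆ Λ') :
    projFull Λ ⊆ projFull Λ' := by
  intro p hp
  simp only [projFull, projJ, Finset.mem_biUnion, Finset.mem_image] at hp ⊢
  obtain ⟨j, hj, x, hx, hxp⟩ := hp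
  exact ⟨j, hj, x, h hx, hxp⟩

lemma diagDist_spec {n d : ℕ} (hn : 0 < n) (u : Cfg n d) :
    ∃ x : Pt d, ∀ j, ptNorm (u j - x) ≤ diagDist u := by
  have hne : {m : ℕ | ∃ x : Pt d, ∀ j, ptNorm (u j - x) ≤ m}.Nonempty :=
    ⟨Finset.univ.sup fun j => ptNorm (u j - u ⟨0, hn⟩), u ⟨0, hn⟩,
      fun j => Finset.le_sup (f := fun j => ptNorm (u j - u ⟨0, hn⟩))
        (Finset.mem_univ j)⟩
  exact Nat.sInf_mem hne

lemma diagDist_eq_zero_of_one {d : ℕ} (u : Cfg 1 d) : diagDist u = 0 := by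
  have : 0 ∈ {m : ℕ | ∃ x : Pt d, ∀ j, ptNorm (u j - x) ≤ m} := by
    refine ⟨u 0, fun j => ?_⟩
    have : j = 0 := Subsingleton.elim _ _
    subst this
    simp [ptNorm, ptNorm_le_iff]
  exact Nat.le_zero.mp (Nat.sInf_le this)

lemma completelySeparable_aux {n d : ℕ} {r0 L : ℕ} {u v : Cfg n d}
    (hn1 : 1 ≤ n) (hr0 : 1 ≤ r0) (hL : 8 * r0 < L)
    (hFIu : IsFI r0 L u) (hFIv : IsFI r0 L v)
    (hdist : 11 * n * L ≤ cfgNorm (u - v)) :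
    CompletelySeparable r0 L u v := by
  rw [CompletelySeparable, Finset.eq_empty_iff_forall_notMem]
  intro p hp
  rw [Finset.mem_inter] at hp
  obtain ⟨j1, h1⟩ := mem_projFull_cube hp.1
  obtain ⟨j2, h2⟩ := mem_projFull_cube hp.2
  obtain ⟨xu, hxu⟩ := diagDist_spec hn1 u
  obtain ⟨xv, hxv⟩ := diagDist_spec hn1 v
  have hsub : ∀ (a b : Pt d), ptNorm (a - b) = ptNorm (b - a) := by
    intro a b
    unfold ptNorm
    congr 1; funext i
    have : (a - b) i = -((b - a) i) := by simp only [Pi.sub_apply]; ring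
    rw [this, Int.natAbs_neg]
  have hbound : cfgNorm (u - v) ≤
      2 * diagDist u + 2 * diagDist v + 2 * (L + r0) := by
    apply Finset.sup_le
    intro j _
    have hjj : (u - v) j = u j - v j := rfl
    rw [hjj]
    calc ptNorm (u j - v j)
        ≤ ptNorm (u j - xu) + ptNorm (xu - v j) := ptNorm_triangle _ _ _
      _ ≤ ptNorm (u j - xu) + (ptNorm (xu - u j1) + ptNorm (u j1 - v j)) :=
          Nat.add_le_add_left (ptNorm_triangle _ _ _) _
      _ ≤ ptNorm (u j - xu) + (ptNorm (xu - u j1) +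
            (ptNorm (u j1 - p) + ptNorm (p - v j))) := by
          exact Nat.add_le_add_left (Nat.add_le_add_left (ptNorm_triangle _ _ _) _) _
      _ ≤ ptNorm (u j - xu) + (ptNorm (xu - u j1) +
            (ptNorm (u j1 - p) + (ptNorm (p - v j2) + ptNorm (v j2 - v j)))) := by
          exact Nat.add_le_add_left (Nat.add_le_add_left
            (Nat.add_le_add_left (ptNorm_triangle _ _ _) _) _) _
      _ ≤ ptNorm (u j - xu) + (ptNorm (xu - u j1) +
            (ptNorm (u j1 - p) + (ptNorm (p - v j2) +
              (ptNorm (v j2 - xv) + ptNorm (xv - v j))))) := by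
          exact Nat.add_le_add_left (Nat.add_le_add_left (Nat.add_le_add_left
            (Nat.add_le_add_left (ptNorm_triangle _ _ _) _) _) _) _
      _ ≤ diagDist u + (diagDist u + ((L + r0) + ((L + r0) +
            (diagDist v + diagDist v)))) := by
          exact Nat.add_le_add (hxu j) (Nat.add_le_add (by rw [hsub]; exact hxu j1)
            (Nat.add_le_add (by rw [hsub]; exact h1) (Nat.add_le_add h2
              (Nat.add_le_add (hxv j2) (by rw [hsub]; exact hxv j)))))
      _ = 2 * diagDist u + 2 * diagDist v + 2 * (L + r0) := by ring
  rcases Nat.lt_or_ge n 2 with hn2 | hn2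
  · -- n = 1
    interval_cases n
    have hu0 : diagDist u = 0 := diagDist_eq_zero_of_one u
    have hv0 : diagDist v = 0 := diagDist_eq_zero_of_one v
    rw [hu0, hv0] at hbound
    omega
  · -- n ≥ 2
    have hDu : diagDist u ≤ 2 * n * (L + r0) := hFIu
    have hDv : diagDist v ≤ 2 * n * (L + r0) := hFIv
    have hkey : 2 * (2 * n * (L + r0)) + 2 * (2 * n * (L + r0)) + 2 * (L + r0)
        < 11 * n * L := by
      have h8 : 8 * r0 + 1 ≤ L := hL
      nlinarith [Nat.mul_le_mul_left n h8, hn2, hr0]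
    have : 11 * n * L ≤ 2 * (2 * n * (L + r0)) + 2 * (2 * n * (L + r0)) + 2 * (L + r0) :=
      le_trans hdist (le_trans hbound (by gcongr))
    omega

/-- The restricted Hamiltonian kernel only depends on the potential through its
values on the full projection of the cube. -/
lemma restrictKer_ham_congr {n d : ℕ} (g r : ℝ) (U : Pt d → Pt d → ℝ)
    (Λ : Finset (Cfg n d)) (v1 v2 : Pt d → ℝ)
    (h : ∀ a ∈ projFull Λ, v1 a = v2 a) :
    restrictKer Λ (ham g r U v1) = restrictKer Λ (ham g r U v2) := by
  funext x y
  unfold restrictKer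
  by_cases hxy : x ∈ Λ ∧ y ∈ Λ
  · simp only [if_pos hxy]
    unfold ham
    congr 1
    by_cases hxy2 : x = y
    · simp only [if_pos hxy2]
      exact Finset.sum_congr rfl fun j _ => h (x j) (mem_projFull_of_mem hxy.1 j)
    · simp [hxy2]
  · simp [hxy]

/-- Lemma 3.7: if `L₀ > 8r₀` and the FI cubes `Λ_{L_k}(u)`, `Λ_{L_k}(v)`
satisfy `‖u-v‖ ≥ 11 n L_k`, then they are completely separable and the restricted random
operators `H_{Λ_{L_k}(u)}` and `H_{Λ_{L_k}(v)}` are independent. -/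
theorem statement11 {d N : ℕ} (hd : 1 ≤ d) (hN : 2 ≤ N)
    (n : ℕ) (hn1 : 1 ≤ n) (hnN : n ≤ N)
    {Ω : Type} [MeasurableSpace Ω] (P : Measure Ω) [IsProbabilityMeasure P]
    (V : Pt d → Ω → ℝ) (hVmeas : ∀ a, Measurable (V a))
    (μ : Measure ℝ) [IsProbabilityMeasure μ]
    (hiid : iIndepFun V P)
    (hlaw : ∀ a, P.map (V a) = μ)
    (M : ℝ) (hM : 0 < M) (hsupp : μ (Set.Icc (-M) M) = 1)
    (ρ κ : ℝ) (hρ : 0 < ρ) (hκ : 0 < κ)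
    (hHolder : ∃ κ0 > 0, ∀ a b : ℝ, a ≤ b → b - a ≤ κ0 →
        μ (Set.Icc a b) ≤ ENNReal.ofReal (κ⁻¹ * (b - a) ^ ρ))
    (U : Pt d → Pt d → ℝ) (r0 : ℕ) (hr0 : 1 ≤ r0) (M1 : ℝ)
    (hUbdd : ∀ x x', |U x x'| ≤ M1) (hUsym : ∀ x x', U x x' = U x' x)
    (hUfin : ∀ x x', (r0 : ℕ) ≤ ptNorm (x - x') → U x x' = 0)
    (g r : ℝ)
    (L0 : ℕ) (hL0 : 8 * r0 < L0) (k : ℕ) (u v : Cfg n d)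
    (hFIu : IsFI r0 (Lscale L0 k) u) (hFIv : IsFI r0 (Lscale L0 k) v)
    (hdist : 11 * n * Lscale L0 k ≤ cfgNorm (u - v)) :
    CompletelySeparable r0 (Lscale L0 k) u v ∧
    IndepFun
      (fun ω => restrictKer (cube (Lscale L0 k) u) (ham g r U fun a => V a ω))
      (fun ω => restrictKer (cube (Lscale L0 k) v) (ham g r U fun a => V a ω)) P := by
  set L := Lscale L0 k with hLdef
  have hLL0 : L0 ≤ L := Nat.le_self_pow (by positivity) L0
  have hLbig : 8 * r0 < L := lt_of_lt_of_le hL0 hLL0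
  have hCS : CompletelySeparable r0 L u v :=
    completelySeparable_aux hn1 hr0 hLbig hFIu hFIv hdist
  refine ⟨hCS, ?_⟩
  -- Independence
  set S : Finset (Pt d) := projFull (cube (L + r0) u) with hSdef
  set T : Finset (Pt d) := projFull (cube (L + r0) v) with hTdef
  have hdisj : Disjoint S T := Finset.disjoint_iff_inter_eq_empty.mpr hCS
  have hsubu : projFull (cube L u) ⊆ S :=
    projFull_mono (cube_mono (Nat.le_add_right _ _) u)
  have hsubv : projFull (cube L v) ⊆ T :=
    projFull_mono (cube_mono (Nat.le_add_right _ _) v)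
  -- the kernels as functions of the restricted potentials
  classical
  set φ : ({a // a ∈ S} → ℝ) → (Cfg n d → Cfg n d → ℝ) := fun w =>
    restrictKer (cube L u) (ham g r U fun a => if h : a ∈ S then w ⟨a, h⟩ else 0)
    with hφdef
  set ψ : ({a // a ∈ T} → ℝ) → (Cfg n d → Cfg n d → ℝ) := fun w =>
    restrictKer (cube L v) (ham g r U fun a => if h : a ∈ T then w ⟨a, h⟩ else 0)
    with hψdef
  have hmeas : ∀ (Λ : Finset (Cfg n d)) (R : Finset (Pt d)),
      Measurable (fun (w : {a // a ∈ R} → ℝ) =>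
        restrictKer Λ (ham g r U fun a => if h : a ∈ R then w ⟨a, h⟩ else 0)) := by
    intro Λ R
    apply measurable_pi_lambda
    intro x
    apply measurable_pi_lambda
    intro y
    unfold restrictKer
    by_cases hxy : x ∈ Λ ∧ y ∈ Λ
    · simp only [if_pos hxy]
      unfold ham
      apply Measurable.add measurable_const
      by_cases hxy2 : x = y
      · simp only [if_pos hxy2]
        apply Finset.measurable_sum
        intro j _
        by_cases hj : x j ∈ R
        · simp only [dif_pos hj]
          exact measurable_pi_apply _
        · simp only [dif_neg hj]
          exact measurable_const
      · simp only [if_neg hxy2]; exact measurable_const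
    · simp only [if_neg hxy]; exact measurable_const
  have hindep : IndepFun (fun ω (i : {a // a ∈ S}) => V i ω)
      (fun ω (i : {a // a ∈ T}) => V i ω) P :=
    hiid.indepFun_finset S T hdisj hVmeas
  have hcomp := hindep.comp (hmeas (cube L u) S) (hmeas (cube L v) T)
  have hequ : (φ ∘ fun ω (i : {a // a ∈ S}) => V i ω) =
      fun ω => restrictKer (cube L u) (ham g r U fun a => V a ω) := by
    funext ω
    simp only [Function.comp, hφdef]
    apply restrictKer_ham_congr
    intro a ha
    have haS : a ∈ S := hsubu ha
    simp [haS]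
  have heqv : (ψ ∘ fun ω (i : {a // a ∈ T}) => V i ω) =
      fun ω => restrictKer (cube L v) (ham g r U fun a => V a ω) := by
    funext ω
    simp only [Function.comp, hψdef]
    apply restrictKer_ham_congr
    intro a ha
    have haT : a ∈ T := hsubv ha
    simp [haT]
  rw [← hequ, ← heqv]
  exact hcomp

end MP
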